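/- Let (Ω, F, P) be a probability space, W : Ω → ℝ a random variable, K > 0 and a > 1 real numbers, and suppose E[e^{aW}] < ∞. Then max(e^W - K, 0) is integrable, the function s ↦ K^{1-(a+is)} · E[e^{(a+is)W}] / ((a+is)(a+is-1)) is Lebesgue integrable over ℝ, and E[max(e^W - K, 0)] = (1/(2π)) · ∫_{-∞}^{∞} K^{1-(a+is)} · E[e^{(a+is)W}] / ((a+is)(a+is-1)) ds, where the complex integral on the right equals the real number on the left. -/

import Mathlib

open MeasureTheory Complex
open Set Filter FourierTransform Real



lemma ne_zero_of_re_pos' {z : ℂ} (h : 0 < z.re) : z ≠ 0 := fun h0 => by simp [h0] at h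

lemma integrableOn_cexp_neg {c : ℂ} (hc : 0 < c.re) :
    IntegrableOn (fun y : ℝ => Complex.exp (-c * y)) (Set.Ioi 0) := by
  apply Integrable.mono' (g := fun y : ℝ => Real.exp (-c.re * y))
    ((exp_neg_integrableOn_Ioi 0 hc))
  · exact (Complex.continuous_exp.comp (continuous_const.mul Complex.continuous_ofReal)).aestronglyMeasurable
  · filter_upwards with y
    simp [Complex.norm_exp]

lemma integral_cexp_neg_Ioi' {c : ℂ} (hc : 0 < c.re) :
    ∫ y in Set.Ioi (0:ℝ), Complex.exp (-c * y) = 1 / c := by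
  have hc0 : c ≠ 0 := ne_zero_of_re_pos' hc
  have hd : ∀ y ∈ Ici (0:ℝ), HasDerivAt (fun y : ℝ => -Complex.exp (-c * y) / c)
      (Complex.exp (-c * y)) y := by
    intro y _
    have h1 : HasDerivAt (fun w : ℂ => -Complex.exp (-c * w) / c) (Complex.exp (-c * y)) (y : ℂ) := by
      have := (Complex.hasDerivAt_exp (-c * y)).comp (y : ℂ)
        ((hasDerivAt_id (y : ℂ)).const_mul (-c))
      simpa [mul_comm, mul_div_assoc, neg_div, mul_div_cancel_left₀ _ hc0] using
        ((this.neg).div_const c)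
    exact h1.comp_ofReal
  have hmul : Tendsto (fun y : ℝ => -(c.re * y)) atTop atBot :=
    tendsto_neg_atBot_iff.mpr ((tendsto_const_mul_atTop_of_pos hc).2 tendsto_id)
  have ht : Tendsto (fun y : ℝ => -Complex.exp (-c * y) / c) atTop (nhds 0) := by
    rw [tendsto_zero_iff_norm_tendsto_zero]
    have h2 : (fun y : ℝ => ‖-Complex.exp (-c * y) / c‖)
        = fun y => Real.exp (-(c.re * y)) / ‖c‖ := by
      funext y; simp [Complex.norm_exp]
    rw [h2]
    simpa using (Real.tendsto_exp_atBot.comp hmul).div_const ‖c‖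
  have := integral_Ioi_of_hasDerivAt_of_tendsto' hd (integrableOn_cexp_neg hc) ht
  simp only [neg_mul] at this ⊢
  rw [this]
  simp [neg_div]



lemma abs_quad_lower {a : ℝ} (ha : 1 < a) (s : ℝ) :
    a * (a - 1) + s ^ 2 ≤ ‖((a : ℂ) + s * I) * (((a : ℂ) + s * I) - 1)‖ := by
  set z : ℂ := (a : ℂ) + s * I with hz
  have hre : (z * (z - 1)).re = a * a - a - s * s := by
    simp [hz, Complex.mul_re, Complex.add_re, Complex.sub_re]; ring
  have him : (z * (z - 1)).im = 2 * a * s - s := by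
    simp [hz, Complex.mul_im]; ring
  have hns : ‖z * (z - 1)‖ ^ 2 = (a * a - a - s * s) ^ 2 + (2 * a * s - s) ^ 2 := by
    rw [Complex.sq_norm, Complex.normSq_apply, hre, him]; ring
  have h1 : (a * (a - 1) + s ^ 2) ^ 2 ≤ ‖z * (z - 1)‖ ^ 2 := by
    rw [hns]; nlinarith [sq_nonneg s, sq_nonneg (a*a - a)]
  have h0 : 0 ≤ a * (a - 1) + s ^ 2 := by nlinarith
  calc a * (a - 1) + s ^ 2 = Real.sqrt ((a * (a - 1) + s ^ 2) ^ 2) := (Real.sqrt_sq h0).symm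
    _ ≤ Real.sqrt (‖z * (z - 1)‖ ^ 2) := Real.sqrt_le_sqrt h1
    _ = ‖z * (z - 1)‖ := Real.sqrt_sq (norm_nonneg _)

lemma integrable_inv_const_add_sq {c : ℝ} (hc : 0 < c) :
    Integrable fun s : ℝ => (c + s ^ 2)⁻¹ := by
  apply Integrable.mono' ((integrable_inv_one_add_sq).const_mul (min c 1)⁻¹)
  · exact (Continuous.inv₀ (by continuity) (fun s => by positivity)).aestronglyMeasurable
  · filter_upwards with s
    have h1 : min c 1 * (1 + s ^ 2) ≤ c + s ^ 2 := by
      have := min_le_left c 1; have := min_le_right c 1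
      nlinarith [sq_nonneg s, lt_min hc one_pos]
    rw [Real.norm_eq_abs, _root_.abs_of_nonneg (by positivity), ← mul_inv]
    exact inv_anti₀ (by positivity) h1

noncomputable def Gfun (a : ℝ) : ℝ → ℂ :=
  Set.indicator (Set.Ioi 0) (fun y : ℝ => Complex.exp (-((a:ℂ) - 1) * y) - Complex.exp (-(a:ℂ) * y))

lemma Gfun_eq {a : ℝ} (ha : 1 < a) :
    Gfun a = fun y : ℝ => ((max (Real.exp y - 1) 0 * Real.exp (-(a * y)) : ℝ) : ℂ) := by
  funext y
  rcases lt_or_ge 0 y with hy | hy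
  · have hmem : y ∈ Set.Ioi (0:ℝ) := hy
    have h1 : (1:ℝ) < Real.exp y := by
      rw [show (1:ℝ) = Real.exp 0 by simp]; exact Real.exp_lt_exp.2 hy
    have hr : max (Real.exp y - 1) 0 * Real.exp (-(a * y))
        = Real.exp ((1 - a) * y) - Real.exp (-(a * y)) := by
      rw [max_eq_left (by linarith), sub_mul, ← Real.exp_add, one_mul,
        show y + -(a * y) = (1 - a) * y by ring]
    simp only [Gfun, Set.indicator_of_mem hmem, hr]
    rw [show -((a:ℂ) - 1) * (y:ℂ) = (((1 - a) * y : ℝ) : ℂ) by push_cast; ring,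
      show -(a:ℂ) * (y:ℂ) = ((-(a * y) : ℝ) : ℂ) by push_cast; ring]
    push_cast [Complex.ofReal_exp]
    ring_nf
  · have hmem : y ∉ Set.Ioi (0:ℝ) := by simpa using hy
    have h1 : Real.exp y ≤ 1 := by
      rw [show (1:ℝ) = Real.exp 0 by simp]; exact Real.exp_le_exp.2 hy
    simp only [Gfun, Set.indicator_of_notMem hmem, max_eq_right (by linarith : Real.exp y - 1 ≤ 0)]
    simp

lemma Gfun_integrable {a : ℝ} (ha : 1 < a) : Integrable (Gfun a) := by
  refine (IntegrableOn.integrable_indicator ?_ measurableSet_Ioi)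
  exact (integrableOn_cexp_neg (by simp; linarith)).sub (integrableOn_cexp_neg (by simp; linarith))

lemma Gfun_continuous {a : ℝ} (ha : 1 < a) : Continuous (Gfun a) := by
  rw [Gfun_eq ha]
  exact Complex.continuous_ofReal.comp
    (((Real.continuous_exp.sub continuous_const).max continuous_const).mul
      (Real.continuous_exp.comp (continuous_const.mul continuous_id).neg))

lemma fourier_Gfun {a : ℝ} (ha : 1 < a) (t : ℝ) :
    𝓕 (Gfun a) t = 1 / (((a:ℂ) + (2*π*t) * I) * (((a:ℂ) + (2*π*t) * I) - 1)) := by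
  have hz0 : ((a:ℂ) + (2*π*t) * I) ≠ 0 := ne_zero_of_re_pos' (by simp; linarith)
  have hz1 : ((a:ℂ) + (2*π*t) * I) - 1 ≠ 0 := ne_zero_of_re_pos' (by simp; linarith)
  have h1re : (0:ℝ) < ((a:ℂ) - 1 + (2*π*t) * I).re := by simp; linarith
  have h0re : (0:ℝ) < ((a:ℂ) + (2*π*t) * I).re := by simp; linarith
  rw [fourier_real_eq_integral_exp_smul]
  have key : ∀ v : ℝ, Complex.exp (↑(-2 * π * v * t) * I) • Gfun a v =
      Set.indicator (Set.Ioi 0) (fun v : ℝ =>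
        Complex.exp (-((a:ℂ) - 1 + (2*π*t) * I) * v) - Complex.exp (-((a:ℂ) + (2*π*t) * I) * v)) v := by
    intro v
    rw [smul_eq_mul]
    rcases lt_or_ge 0 v with hv | hv
    · have hmem : v ∈ Set.Ioi (0:ℝ) := hv
      simp only [Gfun, Set.indicator_of_mem hmem]
      rw [mul_sub, ← Complex.exp_add, ← Complex.exp_add,
        show (↑(-2 * π * v * t) * I + -((a:ℂ) - 1) * ↑v) = -((a:ℂ) - 1 + (2*π*t) * I) * ↑v by
          push_cast; ring,
        show (↑(-2 * π * v * t) * I + -(a:ℂ) * ↑v) = -((a:ℂ) + (2*π*t) * I) * ↑v by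
          push_cast; ring]
    · have hmem : v ∉ Set.Ioi (0:ℝ) := by simpa using hv
      simp only [Gfun, Set.indicator_of_notMem hmem, mul_zero]
  simp_rw [key]
  rw [integral_indicator measurableSet_Ioi,
    integral_sub (integrableOn_cexp_neg h1re) (integrableOn_cexp_neg h0re),
    integral_cexp_neg_Ioi' h1re, integral_cexp_neg_Ioi' h0re,
    show (a:ℂ) - 1 + (2*π*t) * I = ((a:ℂ) + (2*π*t) * I) - 1 by ring]
  field_simp
  ring

lemma fourier_Gfun_integrable {a : ℝ} (ha : 1 < a) : Integrable (𝓕 (Gfun a)) := by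
  have heq : 𝓕 (Gfun a) = fun t : ℝ =>
      1 / (((a:ℂ) + (2*π*t) * I) * (((a:ℂ) + (2*π*t) * I) - 1)) := funext (fourier_Gfun ha)
  rw [heq]
  have hcz : Continuous fun t : ℝ => ((a:ℂ) + (2*π*t) * I) := by
    apply continuous_const.add
    exact ((continuous_const.mul Complex.continuous_ofReal).mul continuous_const)
  apply Integrable.mono' (integrable_inv_const_add_sq (c := a*(a-1)) (by nlinarith))
  · apply (continuous_const.div (hcz.mul (hcz.sub continuous_const)) ?_).aestronglyMeasurable
    intro t
    exact mul_ne_zero (ne_zero_of_re_pos' (by simp; linarith))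
      (ne_zero_of_re_pos' (by simp; linarith))
  · filter_upwards with t
    have hb := abs_quad_lower ha (2*π*t)
    push_cast at hb
    have hpi2 : (9:ℝ) ≤ π^2 := by nlinarith [Real.pi_gt_three]
    have h2 : a*(a-1) + t^2 ≤ a*(a-1) + (2*π*t)^2 := by nlinarith [hpi2, sq_nonneg t]
    have hpos : (0:ℝ) < a*(a-1) + t^2 := by nlinarith
    rw [norm_div, norm_one, one_div]
    exact inv_anti₀ hpos (le_trans h2 hb)

lemma Gfun_inversion {a : ℝ} (ha : 1 < a) (y : ℝ) :
    ∫ t : ℝ, Complex.exp (↑(2 * π * t * y) * I) • 𝓕 (Gfun a) t = Gfun a y := by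
  have h := (Gfun_integrable ha).fourierInv_fourier_eq (fourier_Gfun_integrable ha)
    ((Gfun_continuous ha).continuousAt (x := y))
  rw [fourierInv_eq_fourier_neg, fourier_real_eq_integral_exp_smul] at h
  simp_rw [show ∀ v:ℝ, -2*π*v*(-y) = 2*π*v*y by intro v; ring] at h
  exact h

lemma inner_integral {K a : ℝ} (hK : 0 < K) (ha : 1 < a) (x : ℝ) :
    ∫ s : ℝ, (K:ℂ) ^ ((1:ℂ) - ((a:ℂ) + s * I)) * Complex.exp (((a:ℂ) + s * I) * x) /
      (((a:ℂ) + s * I) * (((a:ℂ) + s * I) - 1))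
    = ((2 * π * max (Real.exp x - K) 0 : ℝ) : ℂ) := by
  set y : ℝ := x - Real.log K with hy
  have hK0 : (K:ℂ) ≠ 0 := by exact_mod_cast hK.ne'
  have h1 : ∀ s : ℝ, (K:ℂ) ^ ((1:ℂ) - ((a:ℂ) + s * I)) * Complex.exp (((a:ℂ) + s * I) * x) /
      (((a:ℂ) + s * I) * (((a:ℂ) + s * I) - 1))
      = ((K * Real.exp (a * y) : ℝ) : ℂ) *
        (Complex.exp ((s * y : ℝ) * I) / (((a:ℂ) + s * I) * (((a:ℂ) + s * I) - 1))) := by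
    intro s
    rw [Complex.cpow_def_of_ne_zero hK0, ← Complex.ofReal_log hK.le]
    have hnum : Complex.exp ((Real.log K : ℂ) * ((1:ℂ) - ((a:ℂ) + s * I))) *
        Complex.exp (((a:ℂ) + s * I) * x)
        = ((K * Real.exp (a * y) : ℝ) : ℂ) * Complex.exp ((s * y : ℝ) * I) := by
      rw [← Complex.exp_add,
        show ((Real.log K : ℂ) * ((1:ℂ) - ((a:ℂ) + s * I)) + ((a:ℂ) + s * I) * x)
            = ((Real.log K : ℝ) : ℂ) + ((a * y : ℝ) : ℂ) + ((s * y : ℝ) : ℂ) * I by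
          push_cast [hy]; ring,
        Complex.exp_add, Complex.exp_add, ← Complex.ofReal_exp, ← Complex.ofReal_exp,
        Real.exp_log hK]
      push_cast
      ring
    rw [mul_div_assoc', hnum, mul_div_assoc]
  -- change of variables s = 2πt and Fourier inversion
  set g : ℝ → ℂ := fun s : ℝ => Complex.exp ((s * y : ℝ) * I) /
      (((a:ℂ) + s * I) * (((a:ℂ) + s * I) - 1)) with hg
  have h0 : (∫ t : ℝ, g (2 * π * t)) = ((2*π)⁻¹ : ℝ) • ∫ s : ℝ, g s := by
    simpa [abs_of_pos, Real.pi_pos, inv_pos.mpr] using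
      MeasureTheory.Measure.integral_comp_mul_left g (2*π)
  have h2 : (∫ s : ℝ, g s) = ((2*π : ℝ) : ℂ) * Gfun a y := by
    have hcancel : ((2*π : ℝ)) • ((2*π)⁻¹ : ℝ) • (∫ s : ℝ, g s) = ∫ s : ℝ, g s := by
      rw [smul_smul, mul_inv_cancel₀ (by positivity), one_smul]
    rw [← hcancel, ← h0]
    have h3 : (∫ t : ℝ, g (2 * π * t)) = Gfun a y := by
      rw [← Gfun_inversion ha y]
      congr 1
      funext t
      rw [hg]
      simp only [fourier_Gfun ha t, smul_eq_mul, mul_one_div]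
      norm_num
    rw [h3, Complex.real_smul]
  simp_rw [h1]
  rw [integral_const_mul, h2, Gfun_eq ha]
  have e1 : Real.exp (a*y) * Real.exp (-(a*y)) = 1 := by rw [← Real.exp_add]; simp
  have e2 : K * max (Real.exp y - 1) 0 = max (Real.exp x - K) 0 := by
    rcases le_total (Real.exp y) 1 with h | h
    · rw [max_eq_right (by linarith), max_eq_right, mul_zero]
      have : Real.exp y = Real.exp x / K := by
        rw [hy, Real.exp_sub, Real.exp_log hK]
      rw [this] at h
      have := (div_le_one hK).mp h
      linarith
    · rw [max_eq_left (by linarith), max_eq_left, mul_sub, mul_one]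
      · congr 1
        rw [hy, Real.exp_sub, Real.exp_log hK]
        field_simp
      · have : Real.exp y = Real.exp x / K := by
          rw [hy, Real.exp_sub, Real.exp_log hK]
        rw [this] at h
        have := (one_le_div hK).mp h
        linarith
  have hreal : K * Real.exp (a*y) * (2*π*(max (Real.exp y - 1) 0 * Real.exp (-(a*y))))
      = 2*π*max (Real.exp x - K) 0 := by
    calc K * Real.exp (a*y) * (2*π*(max (Real.exp y - 1) 0 * Real.exp (-(a*y))))
        = 2*π*((K * max (Real.exp y - 1) 0) * (Real.exp (a*y) * Real.exp (-(a*y)))) := by ring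
      _ = 2*π*max (Real.exp x - K) 0 := by rw [e1, e2, mul_one]
  beta_reduce
  norm_cast



/-- Core pricing identity for average-price Geometric Asian call options: if `K > 0`,
`a > 1` and `E[e^{aW}] < ∞`, then the call payoff `(e^W - K)_+` is integrable, the
transform integrand is integrable over the vertical line, and
`E[(e^W - K)_+] = (1/(2π)) ∫ K^{1-(a+is)} E[e^{(a+is)W}] / ((a+is)(a+is-1)) ds`. -/
theorem asian_call_pricing_identity
    {Ω : Type*} [MeasurableSpace Ω] (P : Measure Ω) [IsProbabilityMeasure P]
    (W : Ω → ℝ) (hW : Measurable W) (K a : ℝ) (hK : 0 < K) (ha : 1 < a)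
    (hint : Integrable (fun ω => Real.exp (a * W ω)) P) :
    Integrable (fun ω => max (Real.exp (W ω) - K) 0) P ∧
    Integrable (fun s : ℝ =>
      (K : ℂ) ^ ((1 : ℂ) - ((a : ℂ) + s * Complex.I)) *
        (∫ ω, Complex.exp (((a : ℂ) + s * Complex.I) * (W ω : ℂ)) ∂P) /
        (((a : ℂ) + s * Complex.I) * (((a : ℂ) + s * Complex.I) - 1))) ∧
    ((∫ ω, max (Real.exp (W ω) - K) 0 ∂P : ℝ) : ℂ)
      = (1 / (2 * Real.pi) : ℂ) * ∫ s : ℝ,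
          (K : ℂ) ^ ((1 : ℂ) - ((a : ℂ) + s * Complex.I)) *
            (∫ ω, Complex.exp (((a : ℂ) + s * Complex.I) * (W ω : ℂ)) ∂P) /
            (((a : ℂ) + s * Complex.I) * (((a : ℂ) + s * Complex.I) - 1)) := by
  open Set Filter FourierTransform Real in
  have hc : (0:ℝ) < a * (a - 1) := by nlinarith
  -- exp W ≤ 1 + exp (a W)
  have hexp_le : ∀ x : ℝ, Real.exp x ≤ 1 + Real.exp (a * x) := by
    intro x
    rcases le_total x 0 with h | h
    · have h1 : Real.exp x ≤ 1 := Real.exp_le_one_iff.2 h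
      have := Real.exp_pos (a * x)
      linarith
    · have h1 : x ≤ a * x := le_mul_of_one_le_left h ha.le
      have := Real.exp_le_exp.2 h1
      linarith
  -- Part 1
  have hpay : Integrable (fun ω => max (Real.exp (W ω) - K) 0) P := by
    apply Integrable.mono' ((integrable_const (1:ℝ)).add hint)
    · exact (((Real.measurable_exp.comp hW).sub_const K).max measurable_const).aestronglyMeasurable
    · filter_upwards with ω
      rw [Real.norm_eq_abs, _root_.abs_of_nonneg (le_max_right _ _)]
      have := hexp_le (W ω)
      apply max_le
      · simp only [Pi.add_apply]; linarith
      · simp only [Pi.add_apply]; positivity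
  -- the joint integrand
  set F : ℝ → Ω → ℂ := fun s ω =>
    (K : ℂ) ^ ((1 : ℂ) - ((a : ℂ) + s * Complex.I)) *
      Complex.exp (((a : ℂ) + s * Complex.I) * (W ω : ℂ)) /
      (((a : ℂ) + s * Complex.I) * (((a : ℂ) + s * Complex.I) - 1)) with hF
  have hzne : ∀ s : ℝ, (((a:ℂ) + s * Complex.I) * (((a:ℂ) + s * Complex.I) - 1)) ≠ 0 := by
    intro s
    exact mul_ne_zero (ne_zero_of_re_pos' (by simp; linarith))
      (ne_zero_of_re_pos' (by simp; linarith))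
  -- joint integrability
  have hFint : Integrable (Function.uncurry F) (volume.prod P) := by
    have hφ : Continuous fun q : ℝ × ℝ =>
        (K : ℂ) ^ ((1 : ℂ) - ((a : ℂ) + q.1 * Complex.I)) *
          Complex.exp (((a : ℂ) + q.1 * Complex.I) * (q.2 : ℂ)) /
          (((a : ℂ) + q.1 * Complex.I) * (((a : ℂ) + q.1 * Complex.I) - 1)) := by
      have hz : Continuous fun q : ℝ × ℝ => (a:ℂ) + (q.1 : ℂ) * Complex.I :=
        continuous_const.add ((Complex.continuous_ofReal.comp continuous_fst).mul continuous_const)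
      apply Continuous.div
      · exact ((continuous_const.sub hz).const_cpow
            (Or.inl (by exact_mod_cast hK.ne'))).mul
          (Complex.continuous_exp.comp (hz.mul (Complex.continuous_ofReal.comp continuous_snd)))
      · exact hz.mul (hz.sub continuous_const)
      · exact fun q => hzne q.1
    have hm : Measurable fun p : ℝ × Ω => (p.1, W p.2) :=
      measurable_fst.prodMk (hW.comp measurable_snd)
    apply Integrable.mono'
      (g := fun p : ℝ × Ω => (a*(a-1) + p.1^2)⁻¹ * (K ^ (1-a) * Real.exp (a * W p.2)))
      ((integrable_inv_const_add_sq hc).mul_prod (hint.const_mul (K ^ (1-a))))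
    · exact (hφ.measurable.comp hm).aestronglyMeasurable
    · filter_upwards with p
      have habs := abs_quad_lower ha p.1
      have hpos : (0:ℝ) < a*(a-1) + p.1^2 := by positivity
      have h1 : ‖Function.uncurry F p‖
          = K ^ (1-a) * Real.exp (a * W p.2) /
            ‖((a:ℂ) + p.1 * Complex.I) * (((a:ℂ) + p.1 * Complex.I) - 1)‖ := by
        rw [Function.uncurry, hF]
        rw [norm_div, norm_mul,
          Complex.norm_cpow_eq_rpow_re_of_pos hK, Complex.norm_exp]
        congr 2
        · simp
        · simp [Complex.mul_re]
      have hX : (0:ℝ) ≤ K ^ (1-a) * Real.exp (a * W p.2) := by positivity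
      have hmono := mul_le_mul_of_nonneg_left (inv_anti₀ hpos habs) hX
      rw [h1, div_eq_mul_inv]
      exact hmono.trans_eq (by ring)
  -- pulling the constant out of the inner integral
  have hpull : ∀ s : ℝ,
      (K : ℂ) ^ ((1 : ℂ) - ((a : ℂ) + s * Complex.I)) *
        (∫ ω, Complex.exp (((a : ℂ) + s * Complex.I) * (W ω : ℂ)) ∂P) /
        (((a : ℂ) + s * Complex.I) * (((a : ℂ) + s * Complex.I) - 1))
      = ∫ ω, F s ω ∂P := by
    intro s
    have heq : (fun ω => F s ω) = fun ω =>
        ((K : ℂ) ^ ((1 : ℂ) - ((a : ℂ) + s * Complex.I)) /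
          (((a : ℂ) + s * Complex.I) * (((a : ℂ) + s * Complex.I) - 1))) *
          Complex.exp (((a : ℂ) + s * Complex.I) * (W ω : ℂ)) := by
      funext ω; rw [hF]; ring
    rw [heq, integral_const_mul]
    ring
  refine ⟨hpay, ?_, ?_⟩
  · have h2 := hFint.integral_prod_left
    apply h2.congr
    filter_upwards with s
    exact (hpull s).symm
  · have hswap := integral_integral_swap hFint
    have hinner : ∀ ω, (∫ s : ℝ, F s ω) = ((2 * π * max (Real.exp (W ω) - K) 0 : ℝ) : ℂ) := by
      intro ω
      rw [hF]
      exact inner_integral hK ha (W ω)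
    calc ((∫ ω, max (Real.exp (W ω) - K) 0 ∂P : ℝ) : ℂ)
        = (1 / (2 * Real.pi) : ℂ) * ((2 * π * ∫ ω, max (Real.exp (W ω) - K) 0 ∂P : ℝ) : ℂ) := by
          push_cast
          have : (π : ℂ) ≠ 0 := by exact_mod_cast Real.pi_ne_zero
          field_simp
      _ = (1 / (2 * Real.pi) : ℂ) * ∫ s : ℝ,
            (K : ℂ) ^ ((1 : ℂ) - ((a : ℂ) + s * Complex.I)) *
              (∫ ω, Complex.exp (((a : ℂ) + s * Complex.I) * (W ω : ℂ)) ∂P) /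
              (((a : ℂ) + s * Complex.I) * (((a : ℂ) + s * Complex.I) - 1)) := by
          congr 1
          simp_rw [hpull, hswap, hinner]
          rw [show (∫ y, (((2 * π * max (Real.exp (W y) - K) 0 : ℝ)) : ℂ) ∂P)
              = (((∫ y, 2 * π * max (Real.exp (W y) - K) 0 ∂P : ℝ)) : ℂ) from integral_ofReal]
          norm_cast
          rw [integral_const_mul]
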